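/- Let G be a simple graph with minimum degree at least 3, let E be a set of edges of G containing at most t' independent edges, and let C be a chordless cycle of G with special vertex v such that for all but at most 4 non-special vertices of C, every edge of G not in C incident to that vertex belongs to E. If l(C) > t' + 6, then G contains a chordless cycle C' with a special vertex such that l(C') ≤ t' + 6 and h(C') ≤ h(C). -/

import Mathlib

/-- A multigraph: a type of vertices, a type of edges, and an incidence map
assigning to each edge its (unordered) pair of endvertices. -/
structure Multigraph where
  V : Type
  E : Type
  ends : E → Sym2 V

namespace Multigraph

/-- A drawing of a multigraph in the plane: vertices are mapped to distinct
points, each edge is drawn as a simple arc joining the images of its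
endvertices, and the interior of every arc avoids the vertex points. -/
structure Drawing (G : Multigraph) where
  vmap : G.V → ℝ × ℝ
  vmap_inj : Function.Injective vmap
  arc : G.E → unitInterval → ℝ × ℝ
  arc_cont : ∀ e, Continuous (arc e)
  arc_inj : ∀ e (s t : unitInterval), arc e s = arc e t →
      s = t ∨ (s = 0 ∧ t = 1) ∨ (s = 1 ∧ t = 0)
  arc_ends : ∀ e, Sym2.map vmap (G.ends e) = s(arc e 0, arc e 1)
  arc_int : ∀ e (t : unitInterval), t ≠ 0 → t ≠ 1 → arc e t ∉ Set.range vmap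

/-- The point `p` is an interior point of the arc drawn for edge `e`. -/
def Drawing.OnEdge {G : Multigraph} (D : G.Drawing) (e : G.E) (p : ℝ × ℝ) : Prop :=
  ∃ t : unitInterval, t ≠ 0 ∧ t ≠ 1 ∧ D.arc e t = p

/-- The set of crossing points of a drawing: points interior to the arcs of
two distinct edges. -/
def Drawing.crossings {G : Multigraph} (D : G.Drawing) : Set (ℝ × ℝ) :=
  {p | ∃ e f : G.E, e ≠ f ∧ D.OnEdge e p ∧ D.OnEdge f p}

/-- The crossing number: the minimum number of crossings over all drawings
(with finitely many crossings). -/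
noncomputable def crossingNumber (G : Multigraph) : ℕ :=
  sInf {n : ℕ | ∃ D : G.Drawing, D.crossings.Finite ∧ D.crossings.ncard = n}

/-- A multigraph is planar if it has a drawing with no crossings. -/
def Planar (G : Multigraph) : Prop := ∃ D : G.Drawing, D.crossings = ∅

/-- Delete a single edge of a multigraph. -/
def deleteEdge (G : Multigraph) (e : G.E) : Multigraph :=
  ⟨G.V, {f : G.E // f ≠ e}, fun f => G.ends f.1⟩

/-- Delete a set of edges of a multigraph. -/
def deleteEdges (G : Multigraph) (S : Set G.E) : Multigraph :=
  ⟨G.V, {f : G.E // f ∉ S}, fun f => G.ends f.1⟩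

/-- `G` is `k`-crossing-critical: `cr(G) ≥ k`, but deleting any edge makes the
crossing number drop below `k`. -/
def CrossingCritical (k : ℕ) (G : Multigraph) : Prop :=
  k ≤ G.crossingNumber ∧ ∀ e : G.E, (G.deleteEdge e).crossingNumber < k

end Multigraph

/-- The multigraph associated to a simple graph. -/
def SimpleGraph.toMultigraph {V : Type} (G : SimpleGraph V) : Multigraph :=
  ⟨V, G.edgeSet, fun e => (e : Sym2 V)⟩

/-- Crossing number of a simple graph. -/
noncomputable def crSG {V : Type} (G : SimpleGraph V) : ℕ :=
  G.toMultigraph.crossingNumber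

/-- Planarity of a simple graph. -/
def PlanarSG {V : Type} (G : SimpleGraph V) : Prop := G.toMultigraph.Planar

/-- A simple graph is `k`-crossing-critical. -/
def SCrossingCritical {V : Type} (k : ℕ) (G : SimpleGraph V) : Prop :=
  k ≤ crSG G ∧ ∀ e ∈ G.edgeSet, crSG (G.deleteEdges {e}) < k

/-- Degree of a vertex in a simple graph. -/
noncomputable def deg {V : Type} (G : SimpleGraph V) (u : V) : ℕ :=
  (G.neighborSet u).ncard

/-- For a cycle `C` (a closed walk based at its special vertex `v`),
`hval G C = Σ_{u ∈ C, u ≠ v} (d(u) - 2)`, the number of hanging edges at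
non-special vertices of `C`. -/
noncomputable def hval {V : Type} [DecidableEq V] (G : SimpleGraph V) {v : V}
    (C : G.Walk v v) : ℕ :=
  ∑ u ∈ C.support.toFinset.erase v, (deg G u - 2)

/-- `e` is a chord of the cycle `C`: an edge of `G` not on `C` with both
endvertices on `C`. -/
def IsChord {V : Type} (G : SimpleGraph V) {v : V} (C : G.Walk v v)
    (e : Sym2 V) : Prop :=
  e ∈ G.edgeSet ∧ e ∉ C.edges ∧ ∀ x ∈ e, x ∈ C.support

/-- The cycle `C` has no chord. -/
def Chordless {V : Type} (G : SimpleGraph V) {v : V} (C : G.Walk v v) : Prop :=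
  ∀ e : Sym2 V, ¬ IsChord G C e

/-- A set of edges is independent if no two of them share an endvertex. -/
def IndepEdges {V : Type} (M : Finset (Sym2 V)) : Prop :=
  ∀ e ∈ M, ∀ f ∈ M, e ≠ f → ∀ x : V, x ∈ e → x ∉ f

/-- `(x, y)` is admissible for `G`: there is a set `E` of `x` edges whose
removal makes `G` planar, such that `E` contains at most `y` independent
edges. -/
def PlanarizingPair {V : Type} [DecidableEq V] (G : SimpleGraph V)
    (x y : ℕ) : Prop :=
  ∃ E : Finset (Sym2 V), ↑E ⊆ G.edgeSet ∧ E.card = x ∧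
    PlanarSG (G.deleteEdges ↑E) ∧ ∀ M ⊆ E, IndepEdges M → M.card ≤ y


open SimpleGraph

namespace ShortenAux

variable {V : Type} {G : SimpleGraph V}

lemma range_map_shift {α : Type*} (f : ℕ → α) (d i : ℕ) :
    (List.range (d + 1)).map (fun k => f (i + k)) =
      f i :: (List.range d).map (fun k => f (i + 1 + k)) := by
  rw [List.range_succ_eq_map, List.map_cons, List.map_map]
  simp only [add_zero, List.cons.injEq, true_and, Function.comp_def]
  apply List.map_congr_left
  intro k _
  exact congrArg f (by omega)

lemma support_eq_range {a b : V} (p : G.Walk a b) :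
    p.support = (List.range (p.length + 1)).map p.getVert := by
  induction p with
  | nil => simp [SimpleGraph.Walk.getVert]
  | cons h q ih =>
    rw [Walk.support_cons, ih, Walk.length_cons]
    conv_rhs => rw [List.range_succ_eq_map, List.map_cons, List.map_map]
    rfl

lemma mem_edges_iff_getVert {a b : V} (p : G.Walk a b) (e : Sym2 V) :
    e ∈ p.edges ↔ ∃ i, i < p.length ∧ e = s(p.getVert i, p.getVert (i + 1)) := by
  induction p with
  | nil => simp
  | cons h q ih =>
    rw [Walk.edges_cons, List.mem_cons, ih]
    constructor
    · rintro (rfl | ⟨i, hi, rfl⟩)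
      · exact ⟨0, by simp, by simp [Walk.getVert_cons_succ, Walk.getVert_zero]⟩
      · exact ⟨i + 1, by simpa using hi, by simp [Walk.getVert_cons_succ]⟩
    · rintro ⟨i, hi, rfl⟩
      cases i with
      | zero => left; simp [Walk.getVert_cons_succ, Walk.getVert_zero]
      | succ i => right; exact ⟨i, by simpa using hi, by simp [Walk.getVert_cons_succ]⟩

lemma seg_exists {a b : V} (p : G.Walk a b) :
    ∀ (d i : ℕ), i + d ≤ p.length →
      ∃ q : G.Walk (p.getVert i) (p.getVert (i + d)),
        q.length = d ∧
        q.support = (List.range (d + 1)).map (fun k => p.getVert (i + k)) ∧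
        q.edges = (List.range d).map (fun k => s(p.getVert (i + k), p.getVert (i + k + 1))) := by
  intro d
  induction d with
  | zero =>
    intro i _
    exact ⟨(Walk.nil' (p.getVert i)).copy rfl (by simp), by simp, by
      simp [List.range_succ], by simp⟩
  | succ d ih =>
    intro i hid
    obtain ⟨q, hlen, hsupp, hedge⟩ := ih (i + 1) (by omega)
    have hadj : G.Adj (p.getVert i) (p.getVert (i + 1)) :=
      p.adj_getVert_succ (by omega)
    have hq : p.getVert (i + 1 + d) = p.getVert (i + (d + 1)) := by
      exact congrArg p.getVert (by omega)
    refine ⟨(Walk.cons hadj q).copy rfl hq, by simp [hlen], ?_, ?_⟩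
    · rw [Walk.support_copy, Walk.support_cons, hsupp,
        range_map_shift (fun k => p.getVert k) (d + 1) i]
    · rw [Walk.edges_copy, Walk.edges_cons, hedge,
        range_map_shift (fun k => s(p.getVert k, p.getVert (k + 1))) d i]

end ShortenAux

section ShortenProof

open SimpleGraph

/-- Let `G` be simple with min degree `≥ 3`, `E` a set of
edges containing at most `t'` independent edges, and `C` a chordless cycle
with special vertex `v` such that all but at most `4` non-special vertices of
`C` have all their hanging edges in `E`. If `l(C) > t' + 6`, then `G` has a
chordless cycle `C'` with a special vertex such that `l(C') ≤ t' + 6` and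
`h(C') ≤ h(C)`. -/
theorem shorten_cycle {V : Type} [Fintype V] [DecidableEq V]
    (G : SimpleGraph V) (hdeg : ∀ u : V, 3 ≤ deg G u)
    (t' : ℕ) (E : Finset (Sym2 V)) (hE : ↑E ⊆ G.edgeSet)
    (hmatch : ∀ M ⊆ E, IndepEdges M → M.card ≤ t')
    (v : V) (C : G.Walk v v) (hC : C.IsCycle) (hchord : Chordless G C)
    (hcover : {z : V | z ∈ C.support ∧ z ≠ v ∧
      ¬ (∀ g ∈ G.edgeSet, g ∉ C.edges → z ∈ g → g ∈ E)}.ncard ≤ 4)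
    (hlen : t' + 6 < C.length) :
    ∃ (v' : V) (C' : G.Walk v' v'), C'.IsCycle ∧ Chordless G C' ∧
      C'.length ≤ t' + 6 ∧ hval G C' ≤ hval G C := by
  classical
  have hn0 : C.getVert 0 = v := C.getVert_zero
  have hnl : C.getVert C.length = v := C.getVert_length
  have hlen7 : t' + 7 ≤ C.length := hlen
  have htail : C.support.tail =
      (List.range C.length).map (fun k => C.getVert (k + 1)) := by
    rw [ShortenAux.support_eq_range C]
    conv_lhs => rw [List.range_succ_eq_map, List.map_cons, List.map_map, List.tail_cons]
    rfl
  have hnodup := hC.support_nodup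
  rw [htail] at hnodup
  have hinjraw := List.inj_on_of_nodup_map hnodup
  have inj : ∀ a b : ℕ, 1 ≤ a → a ≤ C.length → 1 ≤ b → b ≤ C.length →
      C.getVert a = C.getVert b → a = b := by
    intro a b ha1 hal hb1 hbl hab
    have heq : C.getVert (a - 1 + 1) = C.getVert (b - 1 + 1) := by
      rw [show a - 1 + 1 = a by omega, show b - 1 + 1 = b by omega]
      exact hab
    have h := hinjraw (List.mem_range.mpr (show a - 1 < C.length by omega))
      (List.mem_range.mpr (show b - 1 < C.length by omega)) heq
    omega
  have memsup : ∀ k, k ≤ C.length → C.getVert k ∈ C.support := fun k hk =>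
    SimpleGraph.Walk.mem_support_iff_exists_getVert.mpr ⟨k, rfl, hk⟩
  have hne_v : ∀ k, 1 ≤ k → k ≤ t' + 5 → C.getVert k ≠ v := by
    intro k h1 h2 hkv
    have : k = C.length := inj k C.length h1 (by omega) (by omega) le_rfl
      (by rw [hkv, hnl])
    omega
  set window : Finset ℕ := Finset.Icc 1 (t' + 5) with hwin_def
  have hwin : ∀ k ∈ window, 1 ≤ k ∧ k ≤ t' + 5 := by
    intro k hk; rw [hwin_def, Finset.mem_Icc] at hk; exact hk
  set Gd : Finset ℕ := window.filter
    (fun k => ∀ g ∈ G.edgeSet, g ∉ C.edges → C.getVert k ∈ g → g ∈ E) with hGd_def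
  have hGdwin : ∀ k ∈ Gd, (1 ≤ k ∧ k ≤ t' + 5) ∧
      (∀ g ∈ G.edgeSet, g ∉ C.edges → C.getVert k ∈ g → g ∈ E) := by
    intro k hk; rw [hGd_def, Finset.mem_filter] at hk; exact ⟨hwin _ hk.1, hk.2⟩
  -- few bad indices
  have hGdcard : t' + 1 ≤ Gd.card := by
    set B := window.filter
      (fun k => ¬ ∀ g ∈ G.edgeSet, g ∉ C.edges → C.getVert k ∈ g → g ∈ E) with hB_def
    have hinjB : Set.InjOn C.getVert ↑B := by
      intro a ha b hb hab
      rw [Finset.mem_coe, hB_def, Finset.mem_filter] at ha hb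
      have ha' := hwin a ha.1
      have hb' := hwin b hb.1
      exact inj a b ha'.1 (by omega) hb'.1 (by omega) hab
    have hsub : (C.getVert '' ↑B) ⊆ {z : V | z ∈ C.support ∧ z ≠ v ∧
        ¬ (∀ g ∈ G.edgeSet, g ∉ C.edges → z ∈ g → g ∈ E)} := by
      rintro x ⟨k, hk, rfl⟩
      simp only [Finset.mem_coe, hB_def, Finset.mem_filter] at hk
      have hk' := hwin k hk.1
      exact ⟨memsup k (by omega), hne_v k hk'.1 hk'.2, hk.2⟩
    have hBcard : B.card ≤ 4 := by
      calc B.card = (C.getVert '' ↑B).ncard := by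
            rw [Set.ncard_image_of_injOn hinjB, Set.ncard_coe_finset]
        _ ≤ _ := Set.ncard_le_ncard hsub (Set.toFinite _)
        _ ≤ 4 := hcover
    have hsplit := Finset.card_filter_add_card_filter_not (s := window)
      (p := fun k => ∀ g ∈ G.edgeSet, g ∉ C.edges → C.getVert k ∈ g → g ∈ E)
    have hwc : window.card = t' + 5 := by
      rw [hwin_def, Nat.card_Icc]; omega
    rw [← hGd_def, ← hB_def] at hsplit
    omega
  -- outside neighbours
  have hout : ∀ k, ∃ w, k ∈ Gd →
      G.Adj (C.getVert k) w ∧ w ∉ C.support ∧ s(C.getVert k, w) ∈ E := by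
    intro k
    by_cases hk : k ∈ Gd
    swap
    · exact ⟨v, fun h => absurd h hk⟩
    obtain ⟨⟨hk1, hk5⟩, hkP⟩ := hGdwin k hk
    have hzv : C.getVert k ≠ v := hne_v k hk1 hk5
    have h2 : ∀ y, s(C.getVert k, y) ∈ C.edges →
        y = C.getVert (k - 1) ∨ y = C.getVert (k + 1) := by
      intro y hy
      obtain ⟨m, hm, heq⟩ := (ShortenAux.mem_edges_iff_getVert C _).mp hy
      rw [Sym2.eq_iff] at heq
      rcases heq with ⟨h1, h2⟩ | ⟨h1, h2⟩
      · have hm1 : 1 ≤ m := by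
          rcases Nat.eq_zero_or_pos m with rfl | h
          · exact absurd (h1.trans hn0) hzv
          · exact h
        have : k = m := inj k m hk1 (by omega) hm1 (by omega) h1
        right; rw [h2, this]
      · have : k = m + 1 := inj k (m + 1) hk1 (by omega) (by omega) (by omega) h1
        left; rw [h2, this]; simp
    have hnot : ¬ (G.neighborSet (C.getVert k) ⊆
        {C.getVert (k - 1), C.getVert (k + 1)}) := by
      intro hsub
      have h3 : 3 ≤ (G.neighborSet (C.getVert k)).ncard := hdeg (C.getVert k)
      have h4 : (G.neighborSet (C.getVert k)).ncard ≤ 2 := by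
        calc (G.neighborSet (C.getVert k)).ncard
            ≤ ({C.getVert (k - 1), C.getVert (k + 1)} : Set V).ncard :=
              Set.ncard_le_ncard hsub (Set.toFinite _)
          _ ≤ 2 := by
              refine (Set.ncard_insert_le _ _).trans ?_
              simp
      omega
    obtain ⟨y, hy, hyp⟩ := Set.not_subset.mp hnot
    have hadj : G.Adj (C.getVert k) y := hy
    have heE : s(C.getVert k, y) ∈ G.edgeSet := G.mem_edgeSet.mpr hadj
    have henC : s(C.getVert k, y) ∉ C.edges := by
      intro h
      rcases h2 y h with h | h <;> exact hyp (by rw [h]; simp)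
    have hyns : y ∉ C.support := by
      intro hys
      refine hchord s(C.getVert k, y) ⟨heE, henC, ?_⟩
      intro x hx
      rcases Sym2.mem_iff.mp hx with rfl | rfl
      · exact memsup k (by omega)
      · exact hys
    exact ⟨y, fun _ => ⟨hadj, hyns, hkP _ heE henC (Sym2.mem_mk_left _ _)⟩⟩
  choose W hW using hout
  by_cases hinj2 : ∀ k1 ∈ Gd, ∀ k2 ∈ Gd, W k1 = W k2 → k1 = k2
  · exfalso
    have hinj3 : Set.InjOn (fun k => s(C.getVert k, W k)) ↑Gd := by
      intro a ha b hb hab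
      simp only [Finset.mem_coe] at ha hb
      simp only [Sym2.eq_iff] at hab
      obtain ⟨⟨ha1, ha5⟩, _⟩ := hGdwin a ha
      obtain ⟨⟨hb1, hb5⟩, _⟩ := hGdwin b hb
      rcases hab with ⟨h1, h2⟩ | ⟨h1, h2⟩
      · exact inj a b ha1 (by omega) hb1 (by omega) h1
      · exact absurd (memsup a (by omega)) (h1 ▸ (hW b hb).2.1)
    have hMcard : (Gd.image (fun k => s(C.getVert k, W k))).card = Gd.card :=
      Finset.card_image_of_injOn hinj3
    have hME : Gd.image (fun k => s(C.getVert k, W k)) ⊆ E := by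
      intro e he
      obtain ⟨k, hk, rfl⟩ := Finset.mem_image.mp he
      exact (hW k hk).2.2
    have hMI : IndepEdges (Gd.image (fun k => s(C.getVert k, W k))) := by
      intro e he f hf hef x hxe hxf
      obtain ⟨k1, hk1, rfl⟩ := Finset.mem_image.mp he
      obtain ⟨k2, hk2, rfl⟩ := Finset.mem_image.mp hf
      obtain ⟨⟨ha1, ha5⟩, _⟩ := hGdwin k1 hk1
      obtain ⟨⟨hb1, hb5⟩, _⟩ := hGdwin k2 hk2
      rcases Sym2.mem_iff.mp hxe with rfl | rfl <;>
        rcases Sym2.mem_iff.mp hxf with h | h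
      · have : k1 = k2 := inj k1 k2 ha1 (by omega) hb1 (by omega) h
        subst this; exact hef rfl
      · exact absurd (memsup k1 (by omega)) (h ▸ (hW k2 hk2).2.1)
      · exact absurd (memsup k2 (by omega)) (h.symm ▸ (hW k1 hk1).2.1)
      · have : k1 = k2 := hinj2 k1 hk1 k2 hk2 h
        subst this; exact hef rfl
    have := hmatch _ hME hMI
    omega
  push_neg at hinj2
  obtain ⟨k1, hk1, k2, hk2, hWeq, hne⟩ := hinj2
  obtain ⟨hadjk1, hw0s, -⟩ := hW k1 hk1
  obtain ⟨hadjk2, -, -⟩ := hW k2 hk2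
  rw [hWeq] at hadjk1 hw0s
  set w0 := W k2 with hw0_def
  set K : Finset ℕ := window.filter (fun k => G.Adj w0 (C.getVert k)) with hK_def
  have hKmem : ∀ k, k ∈ K ↔ ((1 ≤ k ∧ k ≤ t' + 5) ∧ G.Adj w0 (C.getVert k)) := by
    intro k; rw [hK_def, Finset.mem_filter, hwin_def, Finset.mem_Icc]
  have hk1K : k1 ∈ K := (hKmem k1).mpr ⟨(hGdwin k1 hk1).1, hadjk1.symm⟩
  have hk2K : k2 ∈ K := (hKmem k2).mpr ⟨(hGdwin k2 hk2).1, hadjk2.symm⟩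
  set J : Finset ℕ := K.filter (fun j => ∃ i ∈ K, i < j) with hJ_def
  have hJne : J.Nonempty := by
    rcases lt_or_gt_of_ne hne with h | h
    · exact ⟨k2, Finset.mem_filter.mpr ⟨hk2K, ⟨k1, hk1K, h⟩⟩⟩
    · exact ⟨k1, Finset.mem_filter.mpr ⟨hk1K, ⟨k2, hk2K, h⟩⟩⟩
  obtain ⟨j0, hj0J, hj0min⟩ : ∃ j0 ∈ J, ∀ k ∈ J, j0 ≤ k :=
    ⟨J.min' hJne, J.min'_mem hJne, fun k hk => J.min'_le k hk⟩
  have hj0K : j0 ∈ K := (Finset.mem_filter.mp hj0J).1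
  obtain ⟨i', hi'K, hi'lt⟩ := (Finset.mem_filter.mp hj0J).2
  have hIne : (K.filter (fun i => i < j0)).Nonempty :=
    ⟨i', Finset.mem_filter.mpr ⟨hi'K, hi'lt⟩⟩
  obtain ⟨i0, hi0I, hi0max⟩ : ∃ i0 ∈ K.filter (fun i => i < j0),
      ∀ k ∈ K.filter (fun i => i < j0), k ≤ i0 :=
    ⟨_, (K.filter _).max'_mem hIne, fun k hk => Finset.le_max' _ k hk⟩
  have hi0K : i0 ∈ K := (Finset.mem_filter.mp hi0I).1
  have hi0lt : i0 < j0 := (Finset.mem_filter.mp hi0I).2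
  have gap : ∀ k ∈ K, i0 < k → k < j0 → False := by
    intro k hk h1 h2
    have hkJ : k ∈ J := Finset.mem_filter.mpr ⟨hk, ⟨i0, hi0K, h1⟩⟩
    have := hj0min k hkJ
    omega
  obtain ⟨⟨hi01, hi05⟩, hadji0⟩ := (hKmem i0).mp hi0K
  obtain ⟨⟨hj01, hj05⟩, hadjj0⟩ := (hKmem j0).mp hj0K
  obtain ⟨d, hd1, rfl⟩ : ∃ d, 1 ≤ d ∧ j0 = i0 + d := ⟨j0 - i0, by omega, by omega⟩
  obtain ⟨Q, hQlen, hQsupp, hQedge⟩ := ShortenAux.seg_exists C d i0 (by omega)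
  have hQsuppMem : ∀ x, x ∈ Q.support ↔
      ∃ k, i0 ≤ k ∧ k ≤ i0 + d ∧ C.getVert k = x := by
    intro x
    rw [hQsupp]
    simp only [List.mem_map, List.mem_range]
    constructor
    · rintro ⟨a, ha, rfl⟩; exact ⟨i0 + a, by omega, by omega, rfl⟩
    · rintro ⟨k, h1, h2, rfl⟩
      exact ⟨k - i0, by omega, by rw [show i0 + (k - i0) = k by omega]⟩
  have hQedgeMem : ∀ e, e ∈ Q.edges ↔
      ∃ k, i0 ≤ k ∧ k < i0 + d ∧ e = s(C.getVert k, C.getVert (k + 1)) := by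
    intro e
    rw [hQedge]
    simp only [List.mem_map, List.mem_range]
    constructor
    · rintro ⟨a, ha, rfl⟩; exact ⟨i0 + a, by omega, by omega, rfl⟩
    · rintro ⟨k, h1, h2, rfl⟩
      exact ⟨k - i0, by omega, by rw [show i0 + (k - i0) = k by omega]⟩
  have hQC : ∀ x ∈ Q.support, x ∈ C.support ∧ x ≠ v := by
    intro x hx
    obtain ⟨k, h1, h2, rfl⟩ := (hQsuppMem x).mp hx
    exact ⟨memsup k (by omega), hne_v k (by omega) (by omega)⟩
  have hw0Q : w0 ∉ Q.support := fun h => hw0s (hQC _ h).1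
  have hw0ne : ∀ k, k ≤ C.length → w0 ≠ C.getVert k := fun k hk h =>
    hw0s (h ▸ memsup k hk)
  have hQnodup : Q.support.Nodup := by
    rw [hQsupp]
    refine List.Nodup.map_on ?_ List.nodup_range
    intro a ha b hb hab
    rw [List.mem_range] at ha hb
    have := inj (i0 + a) (i0 + b) (by omega) (by omega) (by omega) (by omega) hab
    omega
  have hQednodup : Q.edges.Nodup := by
    rw [hQedge]
    refine List.Nodup.map_on ?_ List.nodup_range
    intro a ha b hb hab
    rw [List.mem_range] at ha hb
    rw [Sym2.eq_iff] at hab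
    rcases hab with ⟨h1, _⟩ | ⟨h1, h2⟩
    · have := inj (i0 + a) (i0 + b) (by omega) (by omega) (by omega) (by omega) h1
      omega
    · have e1 := inj (i0 + a) (i0 + b + 1) (by omega) (by omega) (by omega)
        (by omega) h1
      have e2 := inj (i0 + a + 1) (i0 + b) (by omega) (by omega) (by omega)
        (by omega) h2
      omega
  have hadjA : G.Adj w0 (C.getVert i0) := hadji0
  have hadjB : G.Adj (C.getVert (i0 + d)) w0 := hadjj0.symm
  set C' : G.Walk w0 w0 :=
    SimpleGraph.Walk.cons hadjA (Q.append (SimpleGraph.Walk.cons hadjB SimpleGraph.Walk.nil))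
    with hC'_def
  have hC's : C'.support = w0 :: (Q.support ++ [w0]) := by
    rw [hC'_def]
    simp [SimpleGraph.Walk.support_append]
  have hC'e : C'.edges =
      s(w0, C.getVert i0) :: (Q.edges ++ [s(C.getVert (i0 + d), w0)]) := by
    rw [hC'_def]
    simp [SimpleGraph.Walk.edges_append]
  have hhead_nQ : s(w0, C.getVert i0) ∉ Q.edges := by
    intro h
    obtain ⟨k, h1, h2, heq⟩ := (hQedgeMem _).mp h
    rw [Sym2.eq_iff] at heq
    rcases heq with ⟨ha, _⟩ | ⟨ha, _⟩ <;> exact hw0ne _ (by omega) ha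
  have hlast_nQ : s(C.getVert (i0 + d), w0) ∉ Q.edges := by
    intro h
    obtain ⟨k, h1, h2, heq⟩ := (hQedgeMem _).mp h
    rw [Sym2.eq_iff] at heq
    rcases heq with ⟨_, hb⟩ | ⟨_, hb⟩ <;> exact hw0ne _ (by omega) hb
  have hhl : s(w0, C.getVert i0) ≠ s(C.getVert (i0 + d), w0) := by
    intro hh
    rw [Sym2.eq_iff] at hh
    rcases hh with ⟨h1, h2⟩ | ⟨h1, h2⟩
    · exact hw0ne _ (by omega) h1
    · have := inj i0 (i0 + d) (by omega) (by omega) (by omega) (by omega) h2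
      omega
  refine ⟨w0, C', ⟨⟨⟨?_⟩, ?_⟩, ?_⟩, ?_, ?_, ?_⟩
  · -- edges nodup
    rw [hC'e]
    rw [List.nodup_cons, List.nodup_append]
    refine ⟨?_, hQednodup, List.nodup_singleton _, ?_⟩
    · simp only [List.mem_append, List.mem_singleton]
      rintro (h | h)
      · exact hhead_nQ h
      · exact hhl h
    · intro e he f he2
      rw [List.mem_singleton] at he2
      subst he2
      exact fun h => hlast_nQ (h ▸ he)
  · -- ne nil
    rw [hC'_def]
    simp
  · -- support tail nodup
    rw [hC's]
    simp only [List.tail_cons]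
    rw [List.nodup_append]
    refine ⟨hQnodup, List.nodup_singleton _, ?_⟩
    intro x hx y hx2
    rw [List.mem_singleton] at hx2
    subst hx2
    exact fun h => hw0Q (h ▸ hx)
  · -- chordless
    intro e
    induction e using Sym2.ind with
    | _ a b =>
      rintro ⟨heE, heC', hesup⟩
      have hadjab : G.Adj a b := G.mem_edgeSet.mp heE
      have ha := hesup a (Sym2.mem_mk_left a b)
      have hb := hesup b (Sym2.mem_mk_right a b)
      rw [hC's] at ha hb
      simp only [List.mem_cons, List.mem_append, List.mem_singleton, List.not_mem_nil, or_false] at ha hb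
      have ha' : a = w0 ∨ a ∈ Q.support := by
        rcases ha with h | h | h
        exacts [Or.inl h, Or.inr h, Or.inl h]
      have hb' : b = w0 ∨ b ∈ Q.support := by
        rcases hb with h | h | h
        exacts [Or.inl h, Or.inr h, Or.inl h]
      have key : ∀ x, x ∈ Q.support → G.Adj w0 x → s(w0, x) ∈ C'.edges := by
        intro x hx hadjx
        obtain ⟨k, hk1, hk2, rfl⟩ := (hQsuppMem x).mp hx
        have hkK : k ∈ K := (hKmem k).mpr ⟨⟨by omega, by omega⟩, hadjx⟩
        have hk' : k = i0 ∨ k = i0 + d := by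
          by_contra hcon
          push_neg at hcon
          exact gap k hkK (by omega) (by omega)
        rw [hC'e]
        rcases hk' with rfl | rfl
        · exact List.mem_cons_self
        · refine List.mem_cons_of_mem _ (List.mem_append_right _ ?_)
          rw [List.mem_singleton, Sym2.eq_swap]
      rcases ha' with rfl | ha' <;> rcases hb' with rfl | hb'
      · exact G.irrefl hadjab
      · exact heC' (key b hb' hadjab)
      · refine heC' ?_
        rw [Sym2.eq_swap]
        exact key a ha' hadjab.symm
      · -- both on Q
        obtain ⟨ka, hka1, hka2, rfl⟩ := (hQsuppMem a).mp ha'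
        obtain ⟨kb, hkb1, hkb2, rfl⟩ := (hQsuppMem b).mp hb'
        by_cases heC : s(C.getVert ka, C.getVert kb) ∈ C.edges
        · obtain ⟨m, hm, heq⟩ := (ShortenAux.mem_edges_iff_getVert C _).mp heC
          have hkav : C.getVert ka ≠ v := hne_v ka (by omega) (by omega)
          have hkbv : C.getVert kb ≠ v := hne_v kb (by omega) (by omega)
          refine heC' ?_
          rw [hC'e]
          refine List.mem_cons_of_mem _ (List.mem_append_left _ ?_)
          rw [Sym2.eq_iff] at heq
          rcases heq with ⟨h1, h2⟩ | ⟨h1, h2⟩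
          · have hm0 : 1 ≤ m := by
              rcases Nat.eq_zero_or_pos m with rfl | h
              · exact absurd (h1.trans hn0) hkav
              · exact h
            have e1 : ka = m := inj ka m (by omega) (by omega) (by omega)
              (by omega) h1
            have e2 : kb = m + 1 := inj kb (m + 1) (by omega) (by omega)
              (by omega) (by omega) h2
            rw [(hQedgeMem _)]
            exact ⟨m, by omega, by omega, by rw [e1, e2]⟩
          · have hm0 : 1 ≤ m := by
              rcases Nat.eq_zero_or_pos m with rfl | h
              · exact absurd (h2.trans hn0) hkbv
              · exact h
            have e1 : ka = m + 1 := inj ka (m + 1) (by omega) (by omega)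
              (by omega) (by omega) h1
            have e2 : kb = m := inj kb m (by omega) (by omega) (by omega)
              (by omega) h2
            rw [(hQedgeMem _)]
            exact ⟨m, by omega, by omega, by rw [e1, e2, Sym2.eq_swap]⟩
        · refine hchord _ ⟨heE, heC, ?_⟩
          intro x hx
          rcases Sym2.mem_iff.mp hx with rfl | rfl
          · exact memsup ka (by omega)
          · exact memsup kb (by omega)
  · -- length
    rw [hC'_def]
    simp only [SimpleGraph.Walk.length_cons, SimpleGraph.Walk.length_append,
      SimpleGraph.Walk.length_nil, hQlen]
    omega
  · -- hval
    unfold hval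
    apply Finset.sum_le_sum_of_subset
    intro x hx
    rw [Finset.mem_erase, List.mem_toFinset] at hx
    obtain ⟨hxw, hxs⟩ := hx
    rw [hC's] at hxs
    simp only [List.mem_cons, List.mem_append, List.mem_singleton, List.not_mem_nil, or_false] at hxs
    have hxQ : x ∈ Q.support := by
      rcases hxs with h | h | h
      exacts [absurd h hxw, h, absurd h hxw]
    rw [Finset.mem_erase, List.mem_toFinset]
    exact ⟨(hQC x hxQ).2, (hQC x hxQ).1⟩

end ShortenProof
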